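/- For every natural number n, the identity ∑_{j=0}^{n} binom(2n, 2j) · catalan(j) · catalan(n−j) = catalan(n) · catalan(n+1) holds. -/

import Mathlib

open scoped BigOperators

private lemma cat_cast (m : ℕ) :
    (catalan m : ℚ) = (2 * m).factorial / (m.factorial * (m + 1).factorial) := by
  have h := succ_mul_catalan_eq_centralBinom m
  rw [Nat.centralBinom_eq_two_mul_choose] at h
  have hc : ((2 * m).choose m : ℚ) =
      (2 * m).factorial / (m.factorial * (2 * m - m).factorial) :=
    Nat.cast_choose ℚ (by omega)
  have h2 : 2 * m - m = m := by omega
  rw [h2] at hc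
  have hq : ((m : ℚ) + 1) * catalan m = (2 * m).choose m := by exact_mod_cast h
  rw [hc] at hq
  have hm : (m.factorial : ℚ) ≠ 0 := by positivity
  rw [Nat.factorial_succ]
  field_simp at hq ⊢
  push_cast
  linear_combination hq

private lemma key_term (n j : ℕ) (h : j ≤ n) :
    ((n + 1).factorial : ℚ) * (n + 1).factorial *
      ((2 * n).choose (2 * j) * catalan j * catalan (n - j)) =
    (2 * n).factorial * ((n + 1).choose (j + 1) * (n + 1).choose j) := by
  have e1 : ((2 * n).choose (2 * j) : ℚ) =
      (2 * n).factorial / ((2 * j).factorial * (2 * (n - j)).factorial) := by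
    have := Nat.cast_choose ℚ (show 2 * j ≤ 2 * n by omega)
    rwa [show 2 * n - 2 * j = 2 * (n - j) by omega] at this
  have e2 : ((n + 1).choose (j + 1) : ℚ) =
      (n + 1).factorial / ((j + 1).factorial * (n - j).factorial) := by
    have := Nat.cast_choose ℚ (show j + 1 ≤ n + 1 by omega)
    rwa [show n + 1 - (j + 1) = n - j by omega] at this
  have e3 : ((n + 1).choose j : ℚ) =
      (n + 1).factorial / (j.factorial * (n - j + 1).factorial) := by
    have := Nat.cast_choose ℚ (show j ≤ n + 1 by omega)
    rwa [show n + 1 - j = n - j + 1 by omega] at this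
  rw [e1, e2, e3, cat_cast, cat_cast]
  have h1 : ((2 * j).factorial : ℚ) ≠ 0 := by positivity
  have h2 : ((2 * (n - j)).factorial : ℚ) ≠ 0 := by positivity
  have h3 : (j.factorial : ℚ) ≠ 0 := by positivity
  have h4 : ((j + 1).factorial : ℚ) ≠ 0 := by positivity
  have h5 : ((n - j).factorial : ℚ) ≠ 0 := by positivity
  have h6 : ((n - j + 1).factorial : ℚ) ≠ 0 := by positivity
  field_simp

private lemma vandermonde_step (n : ℕ) :
    ∑ j ∈ Finset.range (n + 1), (n + 1).choose (j + 1) * (n + 1).choose j =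
      (2 * n + 2).choose n := by
  have h : (2 * n + 2).choose n = ((n + 1) + (n + 1)).choose n := by ring_nf
  rw [h, Nat.add_choose_eq, Finset.Nat.sum_antidiagonal_eq_sum_range_succ_mk]
  refine Finset.sum_congr rfl fun k hk => ?_
  simp only [Finset.mem_range] at hk
  have hsym : (n + 1).choose (n - k) = (n + 1).choose (k + 1) := by
    rw [show n - k = (n + 1) - (k + 1) by omega]
    exact Nat.choose_symm (by omega)
  rw [hsym, mul_comm]

private lemma final_step (n : ℕ) :
    ((n + 1).factorial : ℚ) * (n + 1).factorial * (catalan n * catalan (n + 1)) =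
      (2 * n).factorial * (2 * n + 2).choose n := by
  rw [cat_cast, cat_cast]
  have ec : ((2 * n + 2).choose n : ℚ) =
      (2 * n + 2).factorial / (n.factorial * (n + 2).factorial) := by
    have := Nat.cast_choose ℚ (show n ≤ 2 * n + 2 by omega)
    rwa [show 2 * n + 2 - n = n + 2 by omega] at this
  rw [ec, show 2 * (n + 1) = 2 * n + 2 by ring]
  have h1 : (n.factorial : ℚ) ≠ 0 := by positivity
  have h2 : ((n + 1).factorial : ℚ) ≠ 0 := by positivity
  have h3 : ((n + 2).factorial : ℚ) ≠ 0 := by positivity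
  rw [show (n + 2).factorial = (n + 2) * (n + 1).factorial from rfl,
    show (n + 1).factorial = (n + 1) * n.factorial from rfl,
    show (2 * n + 2).factorial = (2 * n + 2) * (2 * n + 1).factorial from rfl,
    show (2 * n + 1).factorial = (2 * n + 1) * (2 * n).factorial from rfl]
  field_simp

/-- For every natural number `n`, the identity
`∑_{j=0}^{n} binom(2n, 2j) · catalan(j) · catalan(n−j) = catalan(n) · catalan(n+1)` holds. -/
theorem sum_choose_catalan_eq_catalan_mul_catalan (n : ℕ) :
    ∑ j ∈ Finset.range (n + 1),
        Nat.choose (2 * n) (2 * j) * catalan j * catalan (n - j) =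
      catalan n * catalan (n + 1) := by
  have hF : ((n + 1).factorial : ℚ) * (n + 1).factorial ≠ 0 := by positivity
  have hQ : ((∑ j ∈ Finset.range (n + 1),
      Nat.choose (2 * n) (2 * j) * catalan j * catalan (n - j) : ℕ) : ℚ) =
      ((catalan n * catalan (n + 1) : ℕ) : ℚ) := by
    apply mul_left_cancel₀ hF
    push_cast
    rw [Finset.mul_sum]
    calc ∑ j ∈ Finset.range (n + 1), ((n + 1).factorial : ℚ) * (n + 1).factorial *
            ((2 * n).choose (2 * j) * catalan j * catalan (n - j))
        = ∑ j ∈ Finset.range (n + 1),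
            ((2 * n).factorial : ℚ) * ((n + 1).choose (j + 1) * (n + 1).choose j) := by
          refine Finset.sum_congr rfl fun j hj => ?_
          exact key_term n j (by simpa [Nat.lt_succ_iff] using Finset.mem_range.mp hj)
      _ = ((2 * n).factorial : ℚ) *
            ((∑ j ∈ Finset.range (n + 1), (n + 1).choose (j + 1) * (n + 1).choose j : ℕ)) := by
          rw [← Finset.mul_sum]; push_cast; ring
      _ = ((2 * n).factorial : ℚ) * (2 * n + 2).choose n := by rw [vandermonde_step]
      _ = ((n + 1).factorial : ℚ) * (n + 1).factorial * (catalan n * catalan (n + 1)) :=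
          (final_step n).symm
  exact_mod_cast hQ
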